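/- Define the steeple value function: for a row of length 3^n indexed by i with 0 ≤ i < 3^n, let m(i) be the (1-based) position of the first base-3 digit of i (padded to n digits, most significant first) that is not equal to 1. If i = (3^n - 1)/2 (the all-ones index, i.e., the middle), the cross-difference V_n(i) = 3^n; if m(i) > ⌈n/2⌉, then V_n(i) = 3^{2·m(i) - n - 1}. Prove that these values are consistent with the propagation rule: the middle index propagates from value 3^n in row n to values (3^n, 3^{n+1}, 3^n) at indices ((3^{n+1}-3)/2, (3^{n+1}-1)/2, (3^{n+1}+1)/2) in row n+1, and the two flanking indices have middleness n+1, matching 3^{2(n+1)-(n+1)-1} = 3^n. -/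

import Mathlib

/-- The 1-based position of the first base-3 digit of `i` (padded to `n`
digits, most significant first) that is not equal to 1: the middleness of `i`
in a row of length `3^n`. -/
def middleness (n i : ℕ) : ℕ :=
  ((Nat.digits 3 i ++ List.replicate (n - (Nat.digits 3 i).length) 0).reverse.findIdx
    (· ≠ 1)) + 1

lemma digits_mid (n : ℕ) : Nat.digits 3 ((3 ^ n - 1) / 2) = List.replicate n 1 := by
  induction n with
  | zero => simp
  | succ n ih =>
    obtain ⟨k, hk⟩ : Odd (3 ^ n) := Odd.pow ⟨1, rfl⟩
    have h3 : (3:ℕ) ^ (n + 1) = 3 * 3 ^ n := by ring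
    have hM : (3 ^ n - 1) / 2 = k := by omega
    have hstep : (3 ^ (n+1) - 1) / 2 = 3 * k + 1 := by omega
    rw [hstep, Nat.digits_def' (by norm_num : 1 < 3) (by omega)]
    have : (3 * k + 1) / 3 = k := by omega
    have h2 : (3 * k + 1) % 3 = 1 := by omega
    rw [this, h2, ← hM, ih]
    simp [List.replicate_succ]

lemma findIdx_rep (n x : ℕ) (hx : x ≠ 1) :
    (List.replicate n 1 ++ [x]).findIdx (· ≠ 1) = n := by
  induction n with
  | zero => simp [List.findIdx_cons, hx]
  | succ n ih => simp_all [List.replicate_succ, List.findIdx_cons]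

theorem steeple_propagation (n : ℕ) :
    (3 ^ (n + 1) - 1) / 2 = 3 * ((3 ^ n - 1) / 2) + 1 ∧
    (3 ^ (n + 1) - 3) / 2 = 3 * ((3 ^ n - 1) / 2) ∧
    (3 ^ (n + 1) + 1) / 2 = 3 * ((3 ^ n - 1) / 2) + 2 ∧
    middleness (n + 1) ((3 ^ (n + 1) - 3) / 2) = n + 1 ∧
    middleness (n + 1) ((3 ^ (n + 1) + 1) / 2) = n + 1 ∧
    3 ^ (2 * (n + 1) - (n + 1) - 1) = 3 ^ n := by
  obtain ⟨k, hk⟩ : Odd (3 ^ n) := Odd.pow ⟨1, rfl⟩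
  have h3 : (3:ℕ) ^ (n + 1) = 3 * 3 ^ n := by ring
  have hM : (3 ^ n - 1) / 2 = k := by omega
  have hkd : Nat.digits 3 k = List.replicate n 1 := by rw [← hM]; exact digits_mid n
  have e1 : (3 ^ (n + 1) - 3) / 2 = 3 * k := by omega
  have e2 : (3 ^ (n + 1) + 1) / 2 = 3 * k + 2 := by omega
  refine ⟨by omega, by omega, by omega, ?_, ?_, by simp [Nat.two_mul]⟩
  · rw [e1]
    rcases Nat.eq_zero_or_pos k with hk0 | hk0
    · have hn0 : n = 0 := by
        by_contra h
        have : (List.replicate n 1).length = 0 := by rw [← hkd, hk0]; simp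
        simp at this; omega
      subst hn0; simp [hk0, middleness]
    · have hd : Nat.digits 3 (3 * k) = 0 :: List.replicate n 1 := by
        rw [Nat.digits_def' (by norm_num : 1 < 3) (by omega)]
        have : 3 * k / 3 = k := by omega
        have h2 : 3 * k % 3 = 0 := by omega
        rw [this, h2, hkd]
      unfold middleness
      rw [hd]
      simp only [List.length_cons, List.length_replicate]
      have : n + 1 - (n + 1) = 0 := by omega
      rw [this]
      simp only [List.replicate_zero, List.append_nil, List.reverse_cons,
        List.reverse_replicate]
      rw [findIdx_rep n 0 (by norm_num)]
  · rw [e2]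
    have hd : Nat.digits 3 (3 * k + 2) = 2 :: List.replicate n 1 := by
      rw [Nat.digits_def' (by norm_num : 1 < 3) (by omega)]
      have : (3 * k + 2) / 3 = k := by omega
      have h2 : (3 * k + 2) % 3 = 2 := by omega
      rw [this, h2, hkd]
    unfold middleness
    rw [hd]
    simp only [List.length_cons, List.length_replicate]
    have : n + 1 - (n + 1) = 0 := by omega
    rw [this]
    simp only [List.replicate_zero, List.append_nil, List.reverse_cons,
      List.reverse_replicate]
    rw [findIdx_rep n 2 (by norm_num)]
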